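/- Let q be a real number with 0 < q < 1, let c₀, d₀ be real numbers with 0 < c₀ ≤ d₀ and c₀ d₀ = 1, and suppose ν₀ is a nonzero real number such that ν₀ q^{-2 m₀} = q c₀ for some m₀ ∈ ℤ. On the ℂ-vector space of Laurent polynomials in ζ over ℂ, define X(ζ^k) = ν₀ q^{-2k} ζ^k, Z = multiplication by ζ, Y = Z∘(q^{-1}X − c₀·id), and Ŷ = −Z^{-1}∘(qX − d₀·id) where Z^{-1} is multiplication by ζ^{-1}. Then: (1) the subspace W spanned by {ζ^k : k ≤ m₀} is invariant under X, Y and Ŷ; (2) the eigenvalues of X on W are exactly {c₀ q^{2m+1} : m ∈ ℕ}; (3) there exists a positive-definite Hermitian inner product ⟨·,·⟩ on W satisfying ⟨X f, g⟩ = ⟨f, X g⟩ and ⟨Y f, g⟩ = −⟨f, Ŷ g⟩ for all f, g ∈ W. -/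

import Mathlib

open LaurentPolynomial Finsupp

noncomputable def qhdsV (q c₀ d₀ : ℝ) : ℕ → ℝ
  | 0 => 1
  | m + 1 => qhdsV q c₀ d₀ m * (c₀ * (1 - q ^ (2 * (m + 1)))) / (d₀ - c₀ * q ^ (2 * (m + 1)))

lemma qhdsV_pos {q c₀ d₀ : ℝ} (hq0 : 0 < q) (hq1 : q < 1) (hc : 0 < c₀) (hcd : c₀ ≤ d₀) :
    ∀ m, 0 < qhdsV q c₀ d₀ m := by
  intro m
  induction m with
  | zero => norm_num [qhdsV]
  | succ m ih =>
    have hlt : q ^ (2 * (m + 1)) < 1 := pow_lt_one₀ hq0.le hq1 (by omega)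
    have h1 : 0 < c₀ * (1 - q ^ (2 * (m + 1))) := by nlinarith
    have h2 : 0 < d₀ - c₀ * q ^ (2 * (m + 1)) := by nlinarith
    rw [qhdsV]
    positivity

lemma qhds_inner_eq (w : ℤ → ℝ) (f g : LaurentPolynomial ℂ) (s : Finset ℤ)
    (hs : f.coeff.support ∩ g.coeff.support ⊆ s) :
    ∑ k ∈ f.coeff.support, (w k : ℂ) * f.coeff k * (starRingEnd ℂ) (g.coeff k) =
    ∑ k ∈ s, (w k : ℂ) * f.coeff k * (starRingEnd ℂ) (g.coeff k) := by
  have hvan : ∀ k : ℤ, k ∉ f.coeff.support ∩ g.coeff.support →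
      (w k : ℂ) * f.coeff k * (starRingEnd ℂ) (g.coeff k) = 0 := by
    intro k hk
    rw [Finset.mem_inter, not_and_or] at hk
    rcases hk with hk | hk <;> rw [Finsupp.notMem_support_iff] at hk <;> simp [hk]
  rw [← Finset.sum_subset (Finset.inter_subset_left (s₂ := g.coeff.support))
      (fun k _ hk => hvan k hk),
    Finset.sum_subset hs (fun k _ hk => hvan k hk)]


/-- when `qc₀` belongs to the progression `{ν₀q^{-2k}}` (say
`ν₀q^{-2m₀} = qc₀`), the subspace `W` spanned by the monomials `ζ^k` with
`k ≤ m₀` is invariant under `X`, `Y`, `Ŷ`; the eigenvalues of `X` on `W` are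
exactly `{c₀q^{2m+1} : m ∈ ℕ}`; and `W` carries a positive-definite Hermitian
inner product for which `X` is symmetric and `−Ŷ` is adjoint to `Y` (the
holomorphic discrete series). -/
theorem quantum_hyperboloid_discrete_series
    (q : ℝ) (hq0 : 0 < q) (hq1 : q < 1)
    (c₀ d₀ : ℝ) (hc : 0 < c₀) (hcd : c₀ ≤ d₀) (hcd1 : c₀ * d₀ = 1)
    (ν₀ : ℝ) (hν : ν₀ ≠ 0) (m₀ : ℤ) (hm : ν₀ * q ^ (-(2 * m₀)) = q * c₀)
    (X Z Z' Y Yh : LaurentPolynomial ℂ →ₗ[ℂ] LaurentPolynomial ℂ)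
    (hX : ∀ k : ℤ, X (T k) = ((ν₀ : ℂ) * (q : ℂ) ^ (-(2 * k))) • T k)
    (hZ : ∀ f : LaurentPolynomial ℂ, Z f = T 1 * f)
    (hZ' : ∀ f : LaurentPolynomial ℂ, Z' f = T (-1) * f)
    (hY : Y = Z ∘ₗ (((q : ℂ))⁻¹ • X - (c₀ : ℂ) • LinearMap.id))
    (hYh : Yh = -(Z' ∘ₗ ((q : ℂ) • X - (d₀ : ℂ) • LinearMap.id)))
    (W : Submodule ℂ (LaurentPolynomial ℂ))
    (hW : W = Submodule.span ℂ {f : LaurentPolynomial ℂ | ∃ k : ℤ, k ≤ m₀ ∧ f = T k}) :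
    ((∀ f ∈ W, X f ∈ W) ∧ (∀ f ∈ W, Y f ∈ W) ∧ (∀ f ∈ W, Yh f ∈ W)) ∧
    ({μ : ℂ | ∃ f ∈ W, f ≠ 0 ∧ X f = μ • f} =
      {μ : ℂ | ∃ m : ℕ, μ = ((c₀ * q ^ (2 * m + 1) : ℝ) : ℂ)}) ∧
    (∃ inner : LaurentPolynomial ℂ → LaurentPolynomial ℂ → ℂ,
      (∀ f ∈ W, ∀ g ∈ W, inner f g = starRingEnd ℂ (inner g f)) ∧
      (∀ (a : ℂ), ∀ f ∈ W, ∀ g ∈ W, inner (a • f) g = a * inner f g) ∧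
      (∀ f₁ ∈ W, ∀ f₂ ∈ W, ∀ g ∈ W, inner (f₁ + f₂) g = inner f₁ g + inner f₂ g) ∧
      (∀ f ∈ W, f ≠ 0 → 0 < (inner f f).re) ∧
      (∀ f ∈ W, ∀ g ∈ W, inner (X f) g = inner f (X g)) ∧
      (∀ f ∈ W, ∀ g ∈ W, inner (Y f) g = -inner f (Yh g))) := by
  have hq : q ≠ 0 := ne_of_gt hq0
  have hqC : (q : ℂ) ≠ 0 := by exact_mod_cast hq
  -- real eigenvalue formula
  have hnu : ∀ j : ℤ, ν₀ * q ^ (-(2 * j)) = c₀ * q ^ (2 * (m₀ - j) + 1) := by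
    intro j
    have h1 : ν₀ = (q * c₀) * q ^ (2 * m₀) := by
      calc ν₀ = ν₀ * q ^ (-(2 * m₀)) * q ^ (2 * m₀) := by
              rw [mul_assoc, ← zpow_add₀ hq]; simp
        _ = (q * c₀) * q ^ (2 * m₀) := by rw [hm]
    rw [h1, show (2 * (m₀ - j) + 1 : ℤ) = 1 + (2 * m₀ + -(2 * j)) by ring,
      zpow_add₀ hq, zpow_add₀ hq, zpow_one]
    ring
  -- complex eigenvalue formula
  have hlam : ∀ j : ℤ, (ν₀ : ℂ) * (q : ℂ) ^ (-(2 * j)) =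
      ((c₀ * q ^ (2 * (m₀ - j) + 1) : ℝ) : ℂ) := by
    intro j
    rw [← hnu j]; push_cast [Complex.ofReal_zpow]; ring
  -- coefficients of X f
  have hXc : ∀ (f : LaurentPolynomial ℂ) (k : ℤ),
      (X f).coeff k = ((ν₀ : ℂ) * (q : ℂ) ^ (-(2 * k))) * f.coeff k := by
    intro f
    induction f using AddMonoidAlgebra.induction_linear with
    | zero => intro k; simp
    | add f g hf hg =>
        intro k
        rw [map_add, AddMonoidAlgebra.coeff_add, AddMonoidAlgebra.coeff_add, Finsupp.add_apply,
          Finsupp.add_apply, hf k, hg k]; ring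
    | single a b =>
        intro k
        have hs : (AddMonoidAlgebra.single a b : LaurentPolynomial ℂ) = b • T a := by
          rw [show (T a : LaurentPolynomial ℂ) = AddMonoidAlgebra.single a 1 from rfl,
            AddMonoidAlgebra.smul_single, smul_eq_mul, mul_one]
        rw [hs, map_smul, hX a, AddMonoidAlgebra.coeff_smul_apply,
          AddMonoidAlgebra.coeff_smul_apply, AddMonoidAlgebra.coeff_smul_apply, smul_eq_mul, smul_eq_mul, smul_eq_mul]
        by_cases hak : a = k
        · subst hak; ring
        · rw [T_apply, if_neg hak]; ring
  -- shift lemmas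
  have hZc : ∀ (f : LaurentPolynomial ℂ) (k : ℤ), (Z f).coeff k = f.coeff (k - 1) := by
    intro f k
    rw [hZ, show (T 1 : LaurentPolynomial ℂ) = AddMonoidAlgebra.single 1 1 from rfl,
      AddMonoidAlgebra.coeff_single_mul_apply, one_mul, neg_add_eq_sub]
  have hZ'c : ∀ (f : LaurentPolynomial ℂ) (k : ℤ), (Z' f).coeff k = f.coeff (k + 1) := by
    intro f k
    rw [hZ', show (T (-1) : LaurentPolynomial ℂ) = AddMonoidAlgebra.single (-1) 1 from rfl,
      AddMonoidAlgebra.coeff_single_mul_apply, one_mul, neg_neg, add_comm]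
  -- coefficients of Y f and Yh f
  have hYc : ∀ (f : LaurentPolynomial ℂ) (k : ℤ),
      (Y f).coeff k = ((q : ℂ)⁻¹ * ((ν₀ : ℂ) * (q : ℂ) ^ (-(2 * (k - 1)))) - (c₀ : ℂ)) * f.coeff (k - 1) := by
    intro f k
    rw [hY, LinearMap.comp_apply, hZc, LinearMap.sub_apply, LinearMap.smul_apply,
      LinearMap.smul_apply, LinearMap.id_apply, AddMonoidAlgebra.coeff_sub, Finsupp.sub_apply,
      AddMonoidAlgebra.coeff_smul_apply,
      AddMonoidAlgebra.coeff_smul_apply, hXc, smul_eq_mul, smul_eq_mul]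
    ring
  have hYhc : ∀ (f : LaurentPolynomial ℂ) (k : ℤ),
      (Yh f).coeff k = ((d₀ : ℂ) - (q : ℂ) * ((ν₀ : ℂ) * (q : ℂ) ^ (-(2 * (k + 1))))) * f.coeff (k + 1) := by
    intro f k
    rw [hYh, LinearMap.neg_apply, LinearMap.comp_apply, AddMonoidAlgebra.coeff_neg,
      Finsupp.neg_apply, hZ'c,
      LinearMap.sub_apply, LinearMap.smul_apply, LinearMap.smul_apply, LinearMap.id_apply,
      AddMonoidAlgebra.coeff_sub, Finsupp.sub_apply, AddMonoidAlgebra.coeff_smul_apply,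
      AddMonoidAlgebra.coeff_smul_apply, hXc, smul_eq_mul, smul_eq_mul]
    ring
  -- membership criterion for W
  have hWmem : ∀ f : LaurentPolynomial ℂ, f ∈ W ↔ ∀ k : ℤ, m₀ < k → f.coeff k = 0 := by
    intro f
    constructor
    · intro hf
      rw [hW] at hf
      refine Submodule.span_induction ?_ ?_ ?_ ?_ hf
      · rintro x ⟨j, hj, rfl⟩ k hk
        rw [T_apply, if_neg (by omega)]
      · intro k _; simp
      · intro x y _ _ hx hy k hk
        rw [AddMonoidAlgebra.coeff_add, Finsupp.add_apply, hx k hk, hy k hk, add_zero]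
      · intro a x _ hx k hk
        rw [AddMonoidAlgebra.coeff_smul_apply, hx k hk, smul_zero]
    · intro hf
      have hrep : f = ∑ k ∈ f.coeff.support, f.coeff k • T k := by
        conv_lhs => rw [← AddMonoidAlgebra.sum_coeff_single f]
        rw [Finsupp.sum]
        refine Finset.sum_congr rfl fun k _ => ?_
        rw [show (T k : LaurentPolynomial ℂ) = AddMonoidAlgebra.single k 1 from rfl,
          AddMonoidAlgebra.smul_single, smul_eq_mul, mul_one]
      rw [hrep, hW]
      refine Submodule.sum_mem _ fun k hk => Submodule.smul_mem _ _ (Submodule.subset_span ?_)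
      refine ⟨k, ?_, rfl⟩
      by_contra hlt
      exact (Finsupp.mem_support_iff.mp hk) (hf k (by omega))
  -- invariance
  have hXinv : ∀ f ∈ W, X f ∈ W := by
    intro f hf
    rw [hWmem] at hf ⊢
    intro k hk
    rw [hXc, hf k hk, mul_zero]
  have hAm0 : ((q : ℂ)⁻¹ * ((ν₀ : ℂ) * (q : ℂ) ^ (-(2 * m₀))) - (c₀ : ℂ)) = 0 := by
    have e : (2 * (m₀ - m₀) + 1 : ℤ) = 1 := by ring
    rw [hlam m₀, e]
    push_cast [Complex.ofReal_zpow, zpow_one]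
    field_simp
    ring
  have hYinv : ∀ f ∈ W, Y f ∈ W := by
    intro f hf
    rw [hWmem] at hf ⊢
    intro k hk
    rw [hYc]
    by_cases h : m₀ < k - 1
    · rw [hf _ h, mul_zero]
    · have : k - 1 = m₀ := by omega
      rw [this, hAm0, zero_mul]
  have hYhinv : ∀ f ∈ W, Yh f ∈ W := by
    intro f hf
    rw [hWmem] at hf ⊢
    intro k hk
    rw [hYhc, hf (k + 1) (by omega), mul_zero]
  -- eigenvalue set
  have hval : ∀ k : ℤ, k ≤ m₀ → ((ν₀ : ℂ) * (q : ℂ) ^ (-(2 * k))) =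
      ((c₀ * q ^ (2 * (m₀ - k).toNat + 1) : ℝ) : ℂ) := by
    intro k hk
    rw [hlam k, show (2 * (m₀ - k) + 1 : ℤ) = ((2 * (m₀ - k).toNat + 1 : ℕ) : ℤ) by omega,
      zpow_natCast]
  have hEig : {μ : ℂ | ∃ f ∈ W, f ≠ 0 ∧ X f = μ • f} =
      {μ : ℂ | ∃ m : ℕ, μ = ((c₀ * q ^ (2 * m + 1) : ℝ) : ℂ)} := by
    ext μ
    simp only [Set.mem_setOf_eq]
    constructor
    · rintro ⟨f, hfW, hf0, hXf⟩
      obtain ⟨k, hk⟩ : ∃ k, f.coeff k ≠ 0 := by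
        by_contra h
        push_neg at h
        exact hf0 (AddMonoidAlgebra.ext (Finsupp.ext fun k => by simpa using h k))
      have hkm : k ≤ m₀ := by
        by_contra h
        exact hk ((hWmem f).mp hfW k (by omega))
      have h1 : ((ν₀ : ℂ) * (q : ℂ) ^ (-(2 * k))) * f.coeff k = μ * f.coeff k := by
        have h2 := congrArg (fun g : LaurentPolynomial ℂ => g.coeff k) hXf
        simp only [hXc] at h2
        rw [h2, AddMonoidAlgebra.coeff_smul_apply, smul_eq_mul]
      exact ⟨(m₀ - k).toNat, ((mul_right_cancel₀ hk h1).symm).trans (hval k hkm)⟩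
    · rintro ⟨m, rfl⟩
      refine ⟨T (m₀ - m), ?_, ?_, ?_⟩
      · rw [hWmem]; intro k hk; rw [T_apply, if_neg (by omega)]
      · intro h
        have := congrArg (fun g : LaurentPolynomial ℂ => g.coeff (m₀ - m)) h
        simp only [T_apply, if_pos rfl] at this
        exact one_ne_zero (α := ℂ) (by simpa using this)
      · rw [hX (m₀ - m), hval (m₀ - m) (by omega),
          show ((m₀ - (m₀ - (m : ℤ))).toNat) = m from by omega]
  -- inner product
  set v : ℕ → ℝ := qhdsV q c₀ d₀ with hv
  set w : ℤ → ℝ := fun k => if k ≤ m₀ then v (m₀ - k).toNat else 1 with hwdef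
  have hwpos : ∀ k, 0 < w k := by
    intro k
    simp only [hwdef]
    split
    · exact qhdsV_pos hq0 hq1 hc hcd _
    · norm_num
  set Φ : LaurentPolynomial ℂ → LaurentPolynomial ℂ → ℂ :=
    fun f g => ∑ k ∈ f.coeff.support, (w k : ℂ) * f.coeff k * (starRingEnd ℂ) (g.coeff k) with hΦ
  have hext : ∀ (f g : LaurentPolynomial ℂ) (s : Finset ℤ), f.coeff.support ∩ g.coeff.support ⊆ s →
      Φ f g = ∑ k ∈ s, (w k : ℂ) * f.coeff k * (starRingEnd ℂ) (g.coeff k) :=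
    fun f g s hs => qhds_inner_eq w f g s hs
  have hherm : ∀ f g, Φ f g = (starRingEnd ℂ) (Φ g f) := by
    intro f g
    rw [hext f g (f.coeff.support ∪ g.coeff.support)
        (Finset.inter_subset_left.trans Finset.subset_union_left),
      hext g f (f.coeff.support ∪ g.coeff.support)
        (Finset.inter_subset_right.trans Finset.subset_union_left),
      map_sum]
    refine Finset.sum_congr rfl fun k _ => ?_
    simp only [map_mul, Complex.conj_conj, Complex.conj_ofReal]
    ring
  have hsmul : ∀ (a : ℂ) f g, Φ (a • f) g = a * Φ f g := by
    intro a f g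
    rw [hext (a • f) g f.coeff.support
        (fun k hk => Finsupp.support_smul (b := a) (g := f.coeff) ((Finset.mem_inter.mp hk).1)), hΦ]
    dsimp only
    rw [Finset.mul_sum]
    refine Finset.sum_congr rfl fun k _ => ?_
    rw [AddMonoidAlgebra.coeff_smul_apply, smul_eq_mul]
    ring
  have hadd : ∀ f₁ f₂ g, Φ (f₁ + f₂) g = Φ f₁ g + Φ f₂ g := by
    intro f₁ f₂ g
    have hu : (f₁ + f₂).coeff.support ∩ g.coeff.support ⊆ f₁.coeff.support ∪ f₂.coeff.support :=
      fun k hk => Finsupp.support_add (g₁ := f₁.coeff) (g₂ := f₂.coeff) ((Finset.mem_inter.mp hk).1)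
    rw [hext (f₁ + f₂) g _ hu,
      hext f₁ g (f₁.coeff.support ∪ f₂.coeff.support)
        (Finset.inter_subset_left.trans Finset.subset_union_left),
      hext f₂ g (f₁.coeff.support ∪ f₂.coeff.support)
        (Finset.inter_subset_left.trans Finset.subset_union_right),
      ← Finset.sum_add_distrib]
    refine Finset.sum_congr rfl fun k _ => ?_
    rw [AddMonoidAlgebra.coeff_add, Finsupp.add_apply]
    ring
  have hpos : ∀ f : LaurentPolynomial ℂ, f ≠ 0 → 0 < (Φ f f).re := by
    intro f hf
    rw [hΦ]
    dsimp only
    rw [Complex.re_sum]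
    refine Finset.sum_pos (fun k hk => ?_) (Finsupp.support_nonempty_iff.mpr (AddMonoidAlgebra.coeff_eq_zero.not.mpr hf))
    have he : (w k : ℂ) * f.coeff k * (starRingEnd ℂ) (f.coeff k) =
        ((w k * Complex.normSq (f.coeff k) : ℝ) : ℂ) := by
      rw [mul_assoc, Complex.mul_conj]
      push_cast
      ring
    rw [he, Complex.ofReal_re]
    exact mul_pos (hwpos k) (Complex.normSq_pos.mpr (Finsupp.mem_support_iff.mp hk))
  have hXsym : ∀ f g, Φ (X f) g = Φ f (X g) := by
    intro f g
    rw [hext (X f) g (f.coeff.support ∪ g.coeff.support)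
        (fun k hk => Finset.mem_union_right _ ((Finset.mem_inter.mp hk).2)),
      hext f (X g) (f.coeff.support ∪ g.coeff.support)
        (fun k hk => Finset.mem_union_left _ ((Finset.mem_inter.mp hk).1))]
    refine Finset.sum_congr rfl fun k _ => ?_
    rw [hXc, hXc, hlam k, map_mul, Complex.conj_ofReal]
    ring
  have hYadj : ∀ f ∈ W, ∀ g ∈ W, Φ (Y f) g = -Φ f (Yh g) := by
    intro f hf g hg
    set F : ℤ → ℂ := fun k => (w k : ℂ) *
        (((q : ℂ)⁻¹ * ((ν₀ : ℂ) * (q : ℂ) ^ (-(2 * (k - 1)))) - (c₀ : ℂ)) * f.coeff (k - 1)) *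
        (starRingEnd ℂ) (g.coeff k) with hF
    set s : Finset ℤ := f.coeff.support.image (· + 1) ∪ g.coeff.support with hs
    have hL : Φ (Y f) g = ∑ k ∈ s, F k := by
      rw [hext (Y f) g s (fun k hk => Finset.mem_union_right _ ((Finset.mem_inter.mp hk).2))]
      exact Finset.sum_congr rfl fun k _ => by rw [hYc, hF]
    have key : ∀ j : ℤ, -((w j : ℂ) * f.coeff j * (starRingEnd ℂ)
          (((d₀ : ℂ) - (q : ℂ) * ((ν₀ : ℂ) * (q : ℂ) ^ (-(2 * (j + 1))))) * g.coeff (j + 1))) =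
        F (j + 1) := by
      intro j
      rw [hF]
      dsimp only
      rw [show (j + 1 - 1 : ℤ) = j by ring]
      by_cases hg1 : g.coeff (j + 1) = 0
      · rw [hg1]; simp
      · have hjm : j + 1 ≤ m₀ := by
          by_contra h
          exact hg1 ((hWmem g).mp hg (j + 1) (by omega))
        obtain ⟨m, hm1⟩ : ∃ m : ℕ, m₀ - j = (m : ℤ) + 1 := ⟨(m₀ - j - 1).toNat, by omega⟩
        have hAj : (q : ℂ)⁻¹ * ((ν₀ : ℂ) * (q : ℂ) ^ (-(2 * j))) - (c₀ : ℂ) =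
            ((c₀ * q ^ (2 * (m + 1)) - c₀ : ℝ) : ℂ) := by
          rw [hlam j, show (2 * (m₀ - j) + 1 : ℤ) = ((2 * (m + 1) + 1 : ℕ) : ℤ) by omega,
            zpow_natCast]
          push_cast
          rw [pow_succ]
          field_simp
        have hBj : (d₀ : ℂ) - (q : ℂ) * ((ν₀ : ℂ) * (q : ℂ) ^ (-(2 * (j + 1)))) =
            ((d₀ - c₀ * q ^ (2 * (m + 1)) : ℝ) : ℂ) := by
          rw [hlam (j + 1), show (2 * (m₀ - (j + 1)) + 1 : ℤ) = ((2 * m + 1 : ℕ) : ℤ) by omega,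
            zpow_natCast]
          push_cast
          rw [show 2 * (m + 1) = 2 * m + 1 + 1 by ring, pow_succ]
          ring
        have hwj : w j = v (m + 1) := by
          simp only [hwdef]
          rw [if_pos (by omega : j ≤ m₀), show (m₀ - j).toNat = m + 1 by omega]
        have hwj1 : w (j + 1) = v m := by
          simp only [hwdef]
          rw [if_pos hjm, show (m₀ - (j + 1)).toNat = m by omega]
        have hβpos : 0 < d₀ - c₀ * q ^ (2 * (m + 1)) := by
          have h1 : q ^ (2 * (m + 1)) < 1 := pow_lt_one₀ hq0.le hq1 (by omega)
          nlinarith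
        have hwrec : w (j + 1) * (c₀ * q ^ (2 * (m + 1)) - c₀) =
            -(w j) * (d₀ - c₀ * q ^ (2 * (m + 1))) := by
          rw [hwj, hwj1, hv]
          show qhdsV q c₀ d₀ m * _ = -(qhdsV q c₀ d₀ (m + 1)) * _
          rw [qhdsV]
          field_simp
          ring
        have hC : ((w (j + 1) : ℝ) : ℂ) * ((c₀ * q ^ (2 * (m + 1)) - c₀ : ℝ) : ℂ) =
            -((w j : ℝ) : ℂ) * ((d₀ - c₀ * q ^ (2 * (m + 1)) : ℝ) : ℂ) := by
          rw [← Complex.ofReal_mul, ← Complex.ofReal_neg, ← Complex.ofReal_mul, hwrec]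
        rw [hAj, hBj, map_mul, Complex.conj_ofReal]
        linear_combination (-(f.coeff j * (starRingEnd ℂ) (g.coeff (j + 1)))) * hC
    have hR : -Φ f (Yh g) = ∑ j ∈ f.coeff.support, F (j + 1) := by
      rw [hΦ]
      dsimp only
      rw [← Finset.sum_neg_distrib]
      refine Finset.sum_congr rfl fun j _ => ?_
      rw [hYhc]
      exact key j
    have himg : ∑ j ∈ f.coeff.support, F (j + 1) = ∑ k ∈ f.coeff.support.image (· + 1), F k :=
      (Finset.sum_image (fun x _ y _ h => by omega)).symm
    have hsub : ∑ k ∈ f.coeff.support.image (· + 1), F k = ∑ k ∈ s, F k := by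
      refine Finset.sum_subset Finset.subset_union_left (fun k _ hk => ?_)
      have hf0 : f.coeff (k - 1) = 0 := by
        rw [← Finsupp.notMem_support_iff]
        intro hmem
        exact hk (Finset.mem_image.mpr ⟨k - 1, hmem, by ring⟩)
      rw [hF]
      dsimp only
      simp [hf0]
    rw [hL, hR, himg, hsub]
  exact ⟨⟨hXinv, hYinv, hYhinv⟩, hEig,
    ⟨Φ, fun f _ g _ => hherm f g, fun a f _ g _ => hsmul a f g,
      fun f₁ _ f₂ _ g _ => hadd f₁ f₂ g, fun f _ hf0 => hpos f hf0,
      fun f _ g _ => hXsym f g, hYadj⟩⟩
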